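/- arXiv:2404.13901 — 2 statements merged into one kernel-verified Lean document; each statement's English description precedes it below -/
import Mathlib

section
/- Pointwise pseudoconvexity estimate for the gradient term. Let K ⊂ ℝ^n be compact, let ψ be of class C^2 on an open neighborhood of K, and assume δ := min over K of |∇ψ| > 0. Then there exist C > 0 and γ* ≥ 1 (depending on g, ψ, K, δ) such that for all γ ≥ γ*, all x ∈ K and all X ∈ ℝ^n, writing φ̃ := e^{γψ}, one has 2 ∇²_g φ̃(X,X) + (Δ_g φ̃) |X|_g^2 ≥ C γ^2 φ̃ |X|_g^2, where |X|_g^2 = g_ij X^i X^j. -/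
open MeasureTheory Set
open scoped Topology RealInnerProductSpace

noncomputable section

/-- Euclidean space `ℝ^n`. -/
abbrev Eucl (n : ℕ) : Type := EuclideanSpace ℝ (Fin n)

variable {n : ℕ}

/-- `i`-th partial derivative `∂_i u`. -/
def pd (u : Eucl n → ℝ) (i : Fin n) (x : Eucl n) : ℝ :=
  fderiv ℝ u x (EuclideanSpace.single i 1)

/-- Laplace–Beltrami operator
`Δ_g u = |g|^{-1/2} ∂_i (|g|^{1/2} g^{ij} ∂_j u)` (with `(g^{ij}) = (g_{ij})⁻¹`). -/
def LapBel (g : Eucl n → Matrix (Fin n) (Fin n) ℝ) (u : Eucl n → ℝ) (x : Eucl n) : ℝ :=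
  (Real.sqrt (g x).det)⁻¹ *
    ∑ i, pd (fun y => Real.sqrt (g y).det * ∑ j, (g y)⁻¹ i j * pd u j y) i x

/-- `⟨∇_g w, ∇_g z⟩_g = g^{ij} ∂_i w ∂_j z`. -/
def gInnerGrad (g : Eucl n → Matrix (Fin n) (Fin n) ℝ) (w z : Eucl n → ℝ) (x : Eucl n) : ℝ :=
  ∑ i, ∑ j, (g x)⁻¹ i j * pd w i x * pd z j x

/-- Uniform ellipticity: `g_{ij}(x) ξ^i ξ^j ≥ θ |ξ|²` for all `x, ξ`. -/
def UniformlyElliptic (g : Eucl n → Matrix (Fin n) (Fin n) ℝ) (θ : ℝ) : Prop :=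
  ∀ (x : Eucl n) (ξ : Fin n → ℝ), θ * ∑ i, (ξ i) ^ 2 ≤ ∑ i, ∑ j, g x i j * ξ i * ξ j

/-- Symmetric matrix-valued metric with `C³` entries having bounded derivatives up to order 3. -/
def MetricC3Bounded (g : Eucl n → Matrix (Fin n) (Fin n) ℝ) : Prop :=
  (∀ x, (g x).IsSymm) ∧ (∀ i j, ContDiff ℝ 3 fun x => g x i j) ∧
    ∃ M : ℝ, ∀ (i j : Fin n) (k : ℕ), k ≤ 3 → ∀ x,
      ‖iteratedFDeriv ℝ k (fun y => g y i j) x‖ ≤ M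

/-- Symmetric matrix-valued metric with `C¹` entries. -/
def MetricC1 (g : Eucl n → Matrix (Fin n) (Fin n) ℝ) : Prop :=
  (∀ x, (g x).IsSymm) ∧ ∀ i j, ContDiff ℝ 1 fun x => g x i j

/-- A bounded open set has `C⁴` boundary: near each boundary point there is a `C⁴` defining
function `ρ` with nonvanishing gradient, `D = {ρ < 0}` and `∂D = {ρ = 0}` locally. -/
def HasC4Boundary (D : Set (Eucl n)) : Prop :=
  ∀ x ∈ frontier D, ∃ (V : Set (Eucl n)) (ρ : Eucl n → ℝ),
    IsOpen V ∧ x ∈ V ∧ ContDiffOn ℝ 4 ρ V ∧ (∀ y ∈ V, gradient ρ y ≠ 0) ∧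
    D ∩ V = {y | y ∈ V ∧ ρ y < 0} ∧ frontier D ∩ V = {y | y ∈ V ∧ ρ y = 0}

/-- `ν` is the outward unit normal field of `D` on `∂D`: `ν = ∇ρ/|∇ρ|` for local `C⁴`
defining functions `ρ`. -/
def IsOutwardNormalField (D : Set (Eucl n)) (ν : Eucl n → Eucl n) : Prop :=
  ∀ x ∈ frontier D, ∃ (V : Set (Eucl n)) (ρ : Eucl n → ℝ),
    IsOpen V ∧ x ∈ V ∧ ContDiffOn ℝ 4 ρ V ∧ (∀ y ∈ V, gradient ρ y ≠ 0) ∧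
    D ∩ V = {y | y ∈ V ∧ ρ y < 0} ∧ frontier D ∩ V = {y | y ∈ V ∧ ρ y = 0} ∧
    ν x = ‖gradient ρ x‖⁻¹ • gradient ρ x

/-- Normal derivative `∂_ν w = ∇w · ν`. -/
def normalDeriv (ν : Eucl n → Eucl n) (w : Eucl n → ℝ) (x : Eucl n) : ℝ :=
  ⟪gradient w x, ν x⟫

/-- Tangential gradient `∇_τ w = ∇w − (∂_ν w) ν`. -/
def tangGrad (ν : Eucl n → Eucl n) (w : Eucl n → ℝ) (x : Eucl n) : Eucl n :=
  gradient w x - (normalDeriv ν w x) • ν x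

/-- `g`-normal derivative `∂_{ν_g} w = g^{ij} ν_i ∂_j w / √(g^{kℓ} ν_k ν_ℓ)`. -/
def gNormalDeriv (g : Eucl n → Matrix (Fin n) (Fin n) ℝ) (ν : Eucl n → Eucl n)
    (w : Eucl n → ℝ) (x : Eucl n) : ℝ :=
  (∑ i, ∑ j, (g x)⁻¹ i j * ν x i * pd w j x) /
    Real.sqrt (∑ k, ∑ l, (g x)⁻¹ k l * ν x k * ν x l)

/-- Christoffel symbols `Γ^k_{ij} = (1/2) g^{kℓ}(∂_i g_{jℓ} + ∂_j g_{iℓ} − ∂_ℓ g_{ij})`. -/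
def christoffel (g : Eucl n → Matrix (Fin n) (Fin n) ℝ) (k i j : Fin n) (x : Eucl n) : ℝ :=
  (1 / 2) * ∑ l, (g x)⁻¹ k l *
    (pd (fun y => g y j l) i x + pd (fun y => g y i l) j x - pd (fun y => g y i j) l x)

/-- Covariant Hessian `∇²_g w(X,X) = (∂_i∂_j w − Γ^k_{ij} ∂_k w) X^i X^j`. -/
def covHess (g : Eucl n → Matrix (Fin n) (Fin n) ℝ) (w : Eucl n → ℝ) (x : Eucl n)
    (X : Fin n → ℝ) : ℝ :=
  ∑ i, ∑ j, (pd (pd w j) i x - ∑ k, christoffel g k i j x * pd w k x) * X i * X j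

/-- The vector `∇_g w = (g^{ij} ∂_j w)_i`. -/
def gGrad (g : Eucl n → Matrix (Fin n) (Fin n) ℝ) (w : Eucl n → ℝ) (x : Eucl n) :
    Fin n → ℝ :=
  fun i => ∑ j, (g x)⁻¹ i j * pd w j x


lemma pd_congr {u v : Eucl n → ℝ} {x : Eucl n} (h : u =ᶠ[nhds x] v) (i : Fin n) :
    pd u i x = pd v i x := by
  unfold pd; rw [Filter.EventuallyEq.fderiv_eq h]

lemma pd_mul {u v : Eucl n → ℝ} {x : Eucl n} (hu : DifferentiableAt ℝ u x)
    (hv : DifferentiableAt ℝ v x) (i : Fin n) :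
    pd (fun y => u y * v y) i x = pd u i x * v x + u x * pd v i x := by
  unfold pd
  rw [fderiv_fun_mul hu hv]
  simp only [ContinuousLinearMap.add_apply, ContinuousLinearMap.smul_apply, smul_eq_mul]
  ring

lemma pd_sum {ι : Type*} {s : Finset ι} {f : ι → Eucl n → ℝ} {x : Eucl n}
    (h : ∀ j ∈ s, DifferentiableAt ℝ (f j) x) (i : Fin n) :
    pd (fun y => ∑ j ∈ s, f j y) i x = ∑ j ∈ s, pd (f j) i x := by
  unfold pd
  rw [fderiv_fun_sum h]
  simp

lemma pd_exp {ψ : Eucl n → ℝ} {x : Eucl n} (hψ : DifferentiableAt ℝ ψ x) (γ : ℝ) (i : Fin n) :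
    pd (fun y => Real.exp (γ * ψ y)) i x = γ * Real.exp (γ * ψ x) * pd ψ i x := by
  have h1 : HasFDerivAt (fun y => γ * ψ y) (γ • fderiv ℝ ψ x) x :=
    hψ.hasFDerivAt.const_mul γ
  have h2 : HasFDerivAt (fun y => Real.exp (γ * ψ y))
      (Real.exp (γ * ψ x) • (γ • fderiv ℝ ψ x)) x :=
    h1.exp
  unfold pd
  rw [h2.fderiv]
  simp [pd]; ring

lemma diffAt_exp {ψ : Eucl n → ℝ} {x : Eucl n} (hψ : DifferentiableAt ℝ ψ x) (γ : ℝ) :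
    DifferentiableAt ℝ (fun y => Real.exp (γ * ψ y)) x :=
  (Real.differentiable_exp.differentiableAt).comp x (hψ.const_mul γ)

lemma contDiff_finset_prod {ι : Type*} [DecidableEq ι] {s : Finset ι} {f : ι → Eucl n → ℝ}
    (h : ∀ j ∈ s, ContDiff ℝ 1 (f j)) :
    ContDiff ℝ 1 (fun x => ∏ j ∈ s, f j x) := by
  classical
  induction s using Finset.induction with
  | empty => simpa using contDiff_const
  | insert a s' hj ih =>
    simp only [Finset.prod_insert hj]
    exact (h a (Finset.mem_insert_self a s')).mul
      (ih fun j hjs => h j (Finset.mem_insert_of_mem hjs))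

lemma contDiff_det {M : Eucl n → Matrix (Fin n) (Fin n) ℝ}
    (h : ∀ i j, ContDiff ℝ 1 fun x => M x i j) :
    ContDiff ℝ 1 (fun x => (M x).det) := by
  have : (fun x => (M x).det)
      = fun x => ∑ σ : Equiv.Perm (Fin n), (Equiv.Perm.sign σ : ℤ) *
          ∏ i, M x (σ i) i := by
    funext x
    rw [Matrix.det_apply]
    congr 1; funext σ; rw [Units.smul_def, zsmul_eq_mul]
  rw [this]
  apply ContDiff.sum
  intro σ _
  exact contDiff_const.mul (contDiff_finset_prod fun j _ => h (σ j) j)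

lemma contDiff_adjugate {M : Eucl n → Matrix (Fin n) (Fin n) ℝ}
    (h : ∀ i j, ContDiff ℝ 1 fun x => M x i j) (i j : Fin n) :
    ContDiff ℝ 1 (fun x => (M x).adjugate i j) := by
  have : (fun x => (M x).adjugate i j)
      = fun x => ((M x).updateRow j (Pi.single i 1)).det := by
    funext x; rw [Matrix.adjugate_apply]
  rw [this]
  apply contDiff_det
  intro a b
  by_cases hab : a = j
  · subst hab; simpa using contDiff_const
  · simpa [Matrix.updateRow_apply, hab] using h a b

section Elliptic
variable {g : Eucl n → Matrix (Fin n) (Fin n) ℝ} {θ : ℝ}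


lemma quad_eq (A : Matrix (Fin n) (Fin n) ℝ) (ξ : Fin n → ℝ) :
    dotProduct (star ξ) (A.mulVec ξ) = ∑ i, ∑ j, A i j * ξ i * ξ j := by
  simp only [dotProduct, Matrix.mulVec, Pi.star_apply, star_trivial]
  congr 1; funext i; rw [Finset.mul_sum]; congr 1; funext j; ring

lemma posdef_of_elliptic (hsym : ∀ x, (g x).IsSymm) (hθ : 0 < θ)
    (hell : UniformlyElliptic g θ) (x : Eucl n) : (g x).PosDef := by
  refine Matrix.PosDef.of_dotProduct_mulVec_pos ?_ ?_
  · rw [Matrix.IsHermitian]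
    simpa [Matrix.conjTranspose_eq_transpose_of_trivial, Matrix.IsSymm] using (hsym x)
  · intro ξ hξ
    rw [quad_eq]
    refine lt_of_lt_of_le ?_ (hell x ξ)
    apply mul_pos hθ
    obtain ⟨i, hi⟩ := Function.ne_iff.mp hξ
    exact Finset.sum_pos' (fun j _ => sq_nonneg _)
      ⟨i, Finset.mem_univ i, lt_of_le_of_ne (sq_nonneg _) (Ne.symm (pow_ne_zero 2 hi))⟩

lemma det_pos_of_elliptic (hsym : ∀ x, (g x).IsSymm) (hθ : 0 < θ)
    (hell : UniformlyElliptic g θ) (x : Eucl n) : 0 < (g x).det :=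
  (posdef_of_elliptic hsym hθ hell x).det_pos

end Elliptic

lemma inv_entry_eq {M : Matrix (Fin n) (Fin n) ℝ} (i j : Fin n) :
    M⁻¹ i j = (M.det)⁻¹ * M.adjugate i j := by
  rw [Matrix.inv_def, Ring.inverse_eq_inv]
  simp [Matrix.smul_apply]

lemma contDiff_inv_entry {M : Eucl n → Matrix (Fin n) (Fin n) ℝ}
    (h : ∀ i j, ContDiff ℝ 1 fun x => M x i j)
    (hdet : ∀ x, (M x).det ≠ 0) (i j : Fin n) :
    ContDiff ℝ 1 (fun x => (M x)⁻¹ i j) := by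
  have : (fun x => (M x)⁻¹ i j) = fun x => ((M x).det)⁻¹ * (M x).adjugate i j := by
    funext x; exact inv_entry_eq i j
  rw [this]
  refine ContDiff.mul ?_ (contDiff_adjugate h i j)
  rw [contDiff_iff_contDiffAt]
  intro x
  exact (contDiffAt_inv ℝ (hdet x)).comp x (contDiff_det h).contDiffAt

lemma contDiff_sqrt_det {M : Eucl n → Matrix (Fin n) (Fin n) ℝ}
    (h : ∀ i j, ContDiff ℝ 1 fun x => M x i j)
    (hdet : ∀ x, 0 < (M x).det) :
    ContDiff ℝ 1 (fun x => Real.sqrt (M x).det) := by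
  rw [contDiff_iff_contDiffAt]
  intro x
  exact (Real.contDiffAt_sqrt (hdet x).ne').comp x (contDiff_det h).contDiffAt

lemma continuous_pd {u : Eucl n → ℝ} (h : ContDiff ℝ 1 u) (i : Fin n) :
    Continuous (pd u i) := by
  have := (contDiff_one_iff_fderiv.mp h).2
  exact ((ContinuousLinearMap.apply ℝ ℝ (EuclideanSpace.single i 1)).continuous).comp this

section Psi
variable {O : Set (Eucl n)} {ψ : Eucl n → ℝ}

lemma diff_psi (hO : IsOpen O) (hψ : ContDiffOn ℝ 2 ψ O) {x : Eucl n} (hx : x ∈ O) :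
    DifferentiableAt ℝ ψ x :=
  (hψ.contDiffAt (hO.mem_nhds hx)).differentiableAt (by norm_num)

lemma contDiffOn_fderiv_psi (hO : IsOpen O) (hψ : ContDiffOn ℝ 2 ψ O) :
    ContDiffOn ℝ 1 (fderiv ℝ ψ) O :=
  hψ.fderiv_of_isOpen hO (by norm_num)

lemma diff_fderiv_psi (hO : IsOpen O) (hψ : ContDiffOn ℝ 2 ψ O) {x : Eucl n} (hx : x ∈ O) :
    DifferentiableAt ℝ (fderiv ℝ ψ) x :=
  (((contDiffOn_fderiv_psi hO hψ).differentiableOn one_ne_zero) x hx).differentiableAt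
    (hO.mem_nhds hx)

lemma diff_pd_psi (hO : IsOpen O) (hψ : ContDiffOn ℝ 2 ψ O) {x : Eucl n} (hx : x ∈ O)
    (j : Fin n) : DifferentiableAt ℝ (pd ψ j) x :=
  (diff_fderiv_psi hO hψ hx).clm_apply (differentiableAt_const _)

lemma contOn_pd_psi (hO : IsOpen O) (hψ : ContDiffOn ℝ 2 ψ O) (j : Fin n) :
    ContinuousOn (pd ψ j) O := by
  have h := (contDiffOn_fderiv_psi hO hψ).continuousOn
  exact ((ContinuousLinearMap.apply ℝ ℝ (EuclideanSpace.single j 1)).continuous).comp_continuousOn h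

lemma pd_pd_psi_eq (hO : IsOpen O) (hψ : ContDiffOn ℝ 2 ψ O) {x : Eucl n} (hx : x ∈ O)
    (i j : Fin n) :
    pd (pd ψ j) i x = fderiv ℝ (fderiv ℝ ψ) x (EuclideanSpace.single i 1)
      (EuclideanSpace.single j 1) := by
  have hc : HasFDerivAt (fderiv ℝ ψ) (fderiv ℝ (fderiv ℝ ψ) x) x :=
    (diff_fderiv_psi hO hψ hx).hasFDerivAt
  have h2 := hc.clm_apply (hasFDerivAt_const (EuclideanSpace.single j 1) x)
  unfold pd
  rw [h2.fderiv]
  simp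

lemma contOn_pd_pd_psi (hO : IsOpen O) (hψ : ContDiffOn ℝ 2 ψ O) (i j : Fin n) :
    ContinuousOn (fun x => pd (pd ψ j) i x) O := by
  have h2 : ContinuousOn (fderiv ℝ (fderiv ℝ ψ)) O := by
    have := (contDiffOn_fderiv_psi hO hψ).fderiv_of_isOpen (m := 0) hO (by norm_num)
    exact (contDiffOn_zero.mp this)
  have hcont : ContinuousOn
      (fun x => fderiv ℝ (fderiv ℝ ψ) x (EuclideanSpace.single i 1)
        (EuclideanSpace.single j 1)) O := by
    apply ((ContinuousLinearMap.apply ℝ ℝ (EuclideanSpace.single j 1)).continuous).comp_continuousOn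
    exact ((ContinuousLinearMap.apply ℝ (Eucl n →L[ℝ] ℝ)
      (EuclideanSpace.single i 1)).continuous).comp_continuousOn h2
  exact hcont.congr (fun x hx => pd_pd_psi_eq hO hψ hx i j)

end Psi

lemma pd_eq_gradient {ψ : Eucl n → ℝ} (x : Eucl n) (i : Fin n) :
    pd ψ i x = gradient ψ x i := by
  have h : ⟪gradient ψ x, EuclideanSpace.single i (1:ℝ)⟫
      = fderiv ℝ ψ x (EuclideanSpace.single i 1) := by
    rw [gradient]
    exact InnerProductSpace.toDual_symm_apply
  rw [pd, ← h, EuclideanSpace.inner_single_right]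
  simp

lemma pdvec_ne_zero {ψ : Eucl n → ℝ} {x : Eucl n} {δ : ℝ} (hδ : 0 < δ)
    (h : δ ≤ ‖gradient ψ x‖) : (fun i => pd ψ i x) ≠ 0 := by
  intro hc
  have hg : gradient ψ x = 0 := by
    ext i
    have := congrFun hc i
    simp only [Pi.zero_apply] at this ⊢
    rw [← pd_eq_gradient]; exact this
  rw [hg] at h; simp at h; linarith

lemma pd_const_mul {u : Eucl n → ℝ} {x : Eucl n} (hu : DifferentiableAt ℝ u x) (c : ℝ)
    (i : Fin n) : pd (fun y => c * u y) i x = c * pd u i x := by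
  unfold pd; rw [fderiv_const_mul hu c]; simp


section Main
variable {g : Eucl n → Matrix (Fin n) (Fin n) ℝ} {O : Set (Eucl n)} {ψ : Eucl n → ℝ}

lemma lapbel_exp (hg1 : ∀ i j, ContDiff ℝ 1 fun x => g x i j)
    (hdet : ∀ x, 0 < (g x).det) (hO : IsOpen O) (hψ : ContDiffOn ℝ 2 ψ O)
    (γ : ℝ) {x : Eucl n} (hx : x ∈ O) :
    LapBel g (fun y => Real.exp (γ * ψ y)) x
      = γ * Real.exp (γ * ψ x) *
        (γ * (∑ i, ∑ j, (g x)⁻¹ i j * pd ψ i x * pd ψ j x) + LapBel g ψ x) := by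
  have hs : ContDiff ℝ 1 (fun y => Real.sqrt (g y).det) := contDiff_sqrt_det hg1 hdet
  have hb : ∀ i j, ContDiff ℝ 1 (fun x => (g x)⁻¹ i j) :=
    contDiff_inv_entry hg1 (fun x => (hdet x).ne')
  have hsx : Real.sqrt ((g x).det) ≠ 0 := (Real.sqrt_pos.mpr (hdet x)).ne'
  set G : Fin n → Eucl n → ℝ :=
    fun i y => Real.sqrt (g y).det * ∑ j, (g y)⁻¹ i j * pd ψ j y with hG
  have hGdiff : ∀ i, DifferentiableAt ℝ (G i) x := by
    intro i
    apply ((hs.differentiable one_ne_zero) x).fun_mul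
    exact DifferentiableAt.fun_sum fun j _ =>
      ((hb i j).differentiable one_ne_zero x).fun_mul (diff_pd_psi hO hψ hx j)
  -- eventual equality
  have hev : ∀ i, (fun y => Real.sqrt (g y).det *
        ∑ j, (g y)⁻¹ i j * pd (fun z => Real.exp (γ * ψ z)) j y)
      =ᶠ[nhds x] (fun y => Real.exp (γ * ψ y) * (γ * G i y)) := by
    intro i
    filter_upwards [hO.mem_nhds hx] with y hy
    simp only [pd_exp (diff_psi hO hψ hy) γ, hG]
    have : ∑ j, (g y)⁻¹ i j * (γ * Real.exp (γ * ψ y) * pd ψ j y)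
        = (γ * Real.exp (γ * ψ y)) * ∑ j, (g y)⁻¹ i j * pd ψ j y := by
      rw [Finset.mul_sum]; congr 1; funext j; ring
    rw [this]; ring
  have hpdF : ∀ i, pd (fun y => Real.sqrt (g y).det *
        ∑ j, (g y)⁻¹ i j * pd (fun z => Real.exp (γ * ψ z)) j y) i x
      = γ * Real.exp (γ * ψ x) * (γ * pd ψ i x * G i x + pd (G i) i x) := by
    intro i
    rw [pd_congr (hev i) i]
    rw [pd_mul (diffAt_exp (diff_psi hO hψ hx) γ)
      (((hGdiff i).const_mul γ)) i]
    rw [pd_exp (diff_psi hO hψ hx) γ i, pd_const_mul (hGdiff i) γ i]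
    ring
  unfold LapBel
  rw [Finset.sum_congr rfl (fun i _ => hpdF i)]
  rw [← Finset.mul_sum]
  have hsplit : ∑ i, (γ * pd ψ i x * G i x + pd (G i) i x)
      = γ * Real.sqrt ((g x).det) * (∑ i, ∑ j, (g x)⁻¹ i j * pd ψ i x * pd ψ j x)
        + ∑ i, pd (G i) i x := by
    rw [Finset.sum_add_distrib]
    congr 1
    have : ∀ i, γ * pd ψ i x * G i x
        = γ * Real.sqrt ((g x).det) * ∑ j, (g x)⁻¹ i j * pd ψ i x * pd ψ j x := by
      intro i
      simp only [hG, Finset.mul_sum]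
      exact Finset.sum_congr rfl fun j _ => by ring
    rw [Finset.sum_congr rfl (fun i _ => this i), ← Finset.mul_sum]
  rw [hsplit]
  have hinv : (Real.sqrt ((g x).det))⁻¹ * Real.sqrt ((g x).det) = 1 :=
    inv_mul_cancel₀ hsx
  set Q := ∑ i, ∑ j, (g x)⁻¹ i j * pd ψ i x * pd ψ j x
  set S := ∑ i, pd (G i) i x
  calc (Real.sqrt ((g x).det))⁻¹ *
        (γ * Real.exp (γ * ψ x) * (γ * Real.sqrt ((g x).det) * Q + S))
      = γ * Real.exp (γ * ψ x) *
        (γ * ((Real.sqrt ((g x).det))⁻¹ * Real.sqrt ((g x).det)) * Q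
          + (Real.sqrt ((g x).det))⁻¹ * S) := by ring
    _ = γ * Real.exp (γ * ψ x) * (γ * Q + (Real.sqrt ((g x).det))⁻¹ * S) := by
        rw [hinv]; ring
end Main



section Main2
variable {g : Eucl n → Matrix (Fin n) (Fin n) ℝ} {O : Set (Eucl n)} {ψ : Eucl n → ℝ}

lemma covhess_exp (hO : IsOpen O) (hψ : ContDiffOn ℝ 2 ψ O)
    (γ : ℝ) {x : Eucl n} (hx : x ∈ O) (X : Fin n → ℝ) :
    covHess g (fun y => Real.exp (γ * ψ y)) x X
      = γ * Real.exp (γ * ψ x) *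
        (γ * (∑ i, pd ψ i x * X i) ^ 2 + covHess g ψ x X) := by
  have hpdφ : ∀ k, pd (fun y => Real.exp (γ * ψ y)) k x
      = γ * Real.exp (γ * ψ x) * pd ψ k x := fun k => pd_exp (diff_psi hO hψ hx) γ k
  have hev : ∀ j, pd (fun y => Real.exp (γ * ψ y)) j
      =ᶠ[nhds x] (fun y => γ * (Real.exp (γ * ψ y) * pd ψ j y)) := by
    intro j
    filter_upwards [hO.mem_nhds hx] with y hy
    rw [pd_exp (diff_psi hO hψ hy) γ j]; ring
  have hpd2 : ∀ i j, pd (pd (fun y => Real.exp (γ * ψ y)) j) i x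
      = γ * Real.exp (γ * ψ x) * (γ * pd ψ i x * pd ψ j x + pd (pd ψ j) i x) := by
    intro i j
    rw [pd_congr (hev j) i,
      pd_const_mul ((diffAt_exp (diff_psi hO hψ hx) γ).fun_mul (diff_pd_psi hO hψ hx j)) γ i,
      pd_mul (diffAt_exp (diff_psi hO hψ hx) γ) (diff_pd_psi hO hψ hx j) i,
      pd_exp (diff_psi hO hψ hx) γ i]
    ring
  have key : ∀ i j, (pd (pd (fun y => Real.exp (γ * ψ y)) j) i x
        - ∑ k, christoffel g k i j x * pd (fun y => Real.exp (γ * ψ y)) k x) * X i * X j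
      = γ * Real.exp (γ * ψ x) * (γ * ((pd ψ i x * X i) * (pd ψ j x * X j))
          + (pd (pd ψ j) i x - ∑ k, christoffel g k i j x * pd ψ k x) * X i * X j) := by
    intro i j
    rw [hpd2 i j]
    have hΓ : ∑ k, christoffel g k i j x * pd (fun y => Real.exp (γ * ψ y)) k x
        = γ * Real.exp (γ * ψ x) * ∑ k, christoffel g k i j x * pd ψ k x := by
      rw [Finset.mul_sum]
      exact Finset.sum_congr rfl fun k _ => by rw [hpdφ k]; ring
    rw [hΓ]; ring
  unfold covHess
  rw [Finset.sum_congr rfl fun i _ => Finset.sum_congr rfl fun j _ => key i j]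
  simp only [← Finset.mul_sum]
  congr 1
  have h1 : ∀ i, ∑ j, (γ * ((pd ψ i x * X i) * (pd ψ j x * X j))
        + (pd (pd ψ j) i x - ∑ k, christoffel g k i j x * pd ψ k x) * X i * X j)
      = γ * ((pd ψ i x * X i) * ∑ j, (pd ψ j x * X j))
        + ∑ j, (pd (pd ψ j) i x - ∑ k, christoffel g k i j x * pd ψ k x) * X i * X j := by
    intro i
    rw [Finset.sum_add_distrib]
    congr 1
    rw [Finset.mul_sum, Finset.mul_sum]
  rw [Finset.sum_congr rfl fun i _ => h1 i, Finset.sum_add_distrib]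
  congr 1
  rw [sq, Finset.sum_mul_sum, Finset.mul_sum]
  exact Finset.sum_congr rfl fun i _ => by rw [Finset.mul_sum, Finset.mul_sum]
end Main2

section Main3
variable {g : Eucl n → Matrix (Fin n) (Fin n) ℝ} {O : Set (Eucl n)} {ψ : Eucl n → ℝ}

lemma christoffel_continuous (hg1 : ∀ i j, ContDiff ℝ 1 fun x => g x i j)
    (hdet : ∀ x, 0 < (g x).det) (k i j : Fin n) :
    Continuous (fun x => christoffel g k i j x) := by
  have hb : ∀ i j, ContDiff ℝ 1 (fun x => (g x)⁻¹ i j) :=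
    contDiff_inv_entry hg1 (fun x => (hdet x).ne')
  unfold christoffel
  apply Continuous.mul continuous_const
  apply continuous_finset_sum
  intro l _
  exact ((hb k l).continuous).mul
    (((continuous_pd (hg1 j l) i).add (continuous_pd (hg1 i l) j)).sub
      (continuous_pd (hg1 i j) l))

lemma lapbel_psi_contOn (hg1 : ∀ i j, ContDiff ℝ 1 fun x => g x i j)
    (hdet : ∀ x, 0 < (g x).det) (hO : IsOpen O) (hψ : ContDiffOn ℝ 2 ψ O) :
    ContinuousOn (LapBel g ψ) O := by
  have hs : ContDiff ℝ 1 (fun y => Real.sqrt (g y).det) := contDiff_sqrt_det hg1 hdet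
  have hb : ∀ i j, ContDiff ℝ 1 (fun x => (g x)⁻¹ i j) :=
    contDiff_inv_entry hg1 (fun x => (hdet x).ne')
  have hpdG : ∀ (i : Fin n), ∀ x ∈ O,
      pd (fun y => Real.sqrt (g y).det * ∑ j, (g y)⁻¹ i j * pd ψ j y) i x
      = pd (fun y => Real.sqrt (g y).det) i x * (∑ j, (g x)⁻¹ i j * pd ψ j x)
        + Real.sqrt ((g x).det) *
          ∑ j, (pd (fun y => (g y)⁻¹ i j) i x * pd ψ j x
            + (g x)⁻¹ i j * pd (pd ψ j) i x) := by
    intro i x hx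
    rw [pd_mul ((hs.differentiable one_ne_zero) x)
      (DifferentiableAt.fun_sum fun j _ =>
        ((hb i j).differentiable one_ne_zero x).fun_mul (diff_pd_psi hO hψ hx j)) i]
    congr 1
    congr 1
    rw [pd_sum (fun j _ =>
      ((hb i j).differentiable one_ne_zero x).fun_mul (diff_pd_psi hO hψ hx j)) i]
    exact Finset.sum_congr rfl fun j _ =>
      pd_mul ((hb i j).differentiable one_ne_zero x) (diff_pd_psi hO hψ hx j) i
  have hL : ContinuousOn (fun x => (Real.sqrt ((g x).det))⁻¹ *
      ∑ i, (pd (fun y => Real.sqrt (g y).det) i x * (∑ j, (g x)⁻¹ i j * pd ψ j x)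
        + Real.sqrt ((g x).det) *
          ∑ j, (pd (fun y => (g y)⁻¹ i j) i x * pd ψ j x
            + (g x)⁻¹ i j * pd (pd ψ j) i x))) O := by
    apply ContinuousOn.mul
    · exact (hs.continuous.continuousOn).inv₀
        (fun x _ => (Real.sqrt_pos.mpr (hdet x)).ne')
    · apply continuousOn_finset_sum
      intro i _
      apply ContinuousOn.add
      · apply ContinuousOn.mul ((continuous_pd hs i).continuousOn)
        exact continuousOn_finset_sum _ fun j _ =>
          ((hb i j).continuous.continuousOn).mul (contOn_pd_psi hO hψ j)
      · apply ContinuousOn.mul (hs.continuous.continuousOn)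
        apply continuousOn_finset_sum
        intro j _
        exact (((continuous_pd (hb i j) i).continuousOn).mul
          (contOn_pd_psi hO hψ j)).add
          (((hb i j).continuous.continuousOn).mul (contOn_pd_pd_psi hO hψ i j))
  apply hL.congr
  intro x hx
  unfold LapBel
  congr 1
  exact Finset.sum_congr rfl fun i _ => hpdG i x hx
end Main3



set_option maxHeartbeats 2000000 in
/-- **Pointwise pseudoconvexity estimate for the gradient term.**
For `φ̃ = e^{γψ}` and `γ` large: `2∇²_g φ̃(X,X) + (Δ_g φ̃)|X|_g² ≥ Cγ²φ̃|X|_g²` on `K`. -/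
theorem pseudoconvexity_gradient_term
    (n : ℕ) (hn : 2 ≤ n)
    (g : Eucl n → Matrix (Fin n) (Fin n) ℝ) (hg : MetricC1 g)
    (θ : ℝ) (hθ : 0 < θ) (hgθ : UniformlyElliptic g θ)
    (K : Set (Eucl n)) (hK : IsCompact K)
    (O : Set (Eucl n)) (hO : IsOpen O) (hKO : K ⊆ O)
    (ψ : Eucl n → ℝ) (hψ : ContDiffOn ℝ 2 ψ O)
    (δ : ℝ) (hδ : 0 < δ) (hψδ : ∀ x ∈ K, δ ≤ ‖gradient ψ x‖) :
    ∃ C > (0 : ℝ), ∃ γstar ≥ (1 : ℝ), ∀ γ ≥ γstar, ∀ x ∈ K, ∀ X : Fin n → ℝ,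
      C * γ ^ 2 * Real.exp (γ * ψ x) * (∑ i, ∑ j, g x i j * X i * X j) ≤
        2 * covHess g (fun y => Real.exp (γ * ψ y)) x X +
          LapBel g (fun y => Real.exp (γ * ψ y)) x *
            (∑ i, ∑ j, g x i j * X i * X j) := by
  obtain ⟨hsym, hg1⟩ := hg
  have hdet : ∀ x, 0 < (g x).det := det_pos_of_elliptic hsym hθ hgθ
  have hb : ∀ i j, ContDiff ℝ 1 (fun x => (g x)⁻¹ i j) :=
    contDiff_inv_entry hg1 (fun x => (hdet x).ne')
  rcases K.eq_empty_or_nonempty with hKe | hne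
  · exact ⟨1, one_pos, 1, le_refl 1, fun γ _ x hx => by simp [hKe] at hx⟩
  -- the function Q
  set Q : Eucl n → ℝ := fun x => ∑ i, ∑ j, (g x)⁻¹ i j * pd ψ i x * pd ψ j x with hQdef
  have hQcont : ContinuousOn Q K := by
    apply ContinuousOn.mono _ hKO
    apply continuousOn_finset_sum; intro i _
    apply continuousOn_finset_sum; intro j _
    exact (((hb i j).continuous.continuousOn).mul (contOn_pd_psi hO hψ i)).mul
      (contOn_pd_psi hO hψ j)
  have hQpos : ∀ x ∈ K, 0 < Q x := by
    intro x hx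
    have hposdef : ((g x)⁻¹).PosDef := (posdef_of_elliptic hsym hθ hgθ x).inv
    have hξ : (fun i => pd ψ i x) ≠ 0 := pdvec_ne_zero hδ (hψδ x hx)
    have := hposdef.dotProduct_mulVec_pos hξ
    rw [quad_eq] at this
    calc (0:ℝ) < ∑ i, ∑ j, (g x)⁻¹ i j * pd ψ i x * pd ψ j x := this
      _ = Q x := rfl
  obtain ⟨x₀, hx₀, hmin'⟩ := hK.exists_isMinOn hne hQcont
  have hmin := isMinOn_iff.mp hmin'
  set c₀ := Q x₀ with hc₀def
  have hc₀ : 0 < c₀ := hQpos x₀ hx₀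
  -- bound on LapBel g ψ
  obtain ⟨x₁, hx₁, hmax₁'⟩ := hK.exists_isMaxOn hne
    (((lapbel_psi_contOn hg1 hdet hO hψ).mono hKO).abs)
  have hmax₁ := isMaxOn_iff.mp hmax₁'
  set M₂ := |LapBel g ψ x₁| with hM₂def
  have hM₂0 : 0 ≤ M₂ := abs_nonneg _
  -- bound on covHess g ψ
  set A : Eucl n → ℝ := fun x => ∑ i, ∑ j,
    |pd (pd ψ j) i x - ∑ k, christoffel g k i j x * pd ψ k x| with hAdef
  have hAcont : ContinuousOn A K := by
    apply ContinuousOn.mono _ hKO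
    apply continuousOn_finset_sum; intro i _
    apply continuousOn_finset_sum; intro j _
    apply ContinuousOn.abs
    exact (contOn_pd_pd_psi hO hψ i j).sub
      (continuousOn_finset_sum _ fun k _ =>
        ((christoffel_continuous hg1 hdet k i j).continuousOn).mul
          (contOn_pd_psi hO hψ k))
  obtain ⟨x₂, hx₂, hmax₂'⟩ := hK.exists_isMaxOn hne hAcont
  have hmax₂ := isMaxOn_iff.mp hmax₂'
  set MH := A x₂ with hMHdef
  have hMH0 : 0 ≤ MH := by
    have : 0 ≤ A x₂ := Finset.sum_nonneg fun i _ =>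
      Finset.sum_nonneg fun j _ => abs_nonneg _
    exact this
  have hcovbound : ∀ x ∈ K, ∀ X : Fin n → ℝ,
      |covHess g ψ x X| ≤ MH * ∑ i, (X i)^2 := by
    intro x hx X
    set S := ∑ i, (X i)^2 with hSdef
    have hS0 : 0 ≤ S := Finset.sum_nonneg fun i _ => sq_nonneg _
    have hXS : ∀ i j : Fin n, |X i * X j| ≤ S := by
      intro i j
      have h1 : (X i)^2 ≤ S :=
        Finset.single_le_sum (f := fun i => (X i)^2) (fun k _ => sq_nonneg _)
          (Finset.mem_univ i)
      have h2 : (X j)^2 ≤ S :=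
        Finset.single_le_sum (f := fun i => (X i)^2) (fun k _ => sq_nonneg _)
          (Finset.mem_univ j)
      rw [abs_le]
      constructor <;> nlinarith [sq_nonneg (X i - X j), sq_nonneg (X i + X j)]
    have step : |covHess g ψ x X| ≤ A x * S := by
      unfold covHess
      calc |∑ i, ∑ j, (pd (pd ψ j) i x - ∑ k, christoffel g k i j x * pd ψ k x)
              * X i * X j|
          ≤ ∑ i, |∑ j, (pd (pd ψ j) i x - ∑ k, christoffel g k i j x * pd ψ k x)
              * X i * X j| := Finset.abs_sum_le_sum_abs _ _
        _ ≤ ∑ i, ∑ j, |(pd (pd ψ j) i x - ∑ k, christoffel g k i j x * pd ψ k x)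
              * X i * X j| :=
            Finset.sum_le_sum fun i _ => Finset.abs_sum_le_sum_abs _ _
        _ ≤ ∑ i, ∑ j, |pd (pd ψ j) i x - ∑ k, christoffel g k i j x * pd ψ k x| * S := by
            apply Finset.sum_le_sum; intro i _
            apply Finset.sum_le_sum; intro j _
            rw [mul_assoc, abs_mul]
            exact mul_le_mul_of_nonneg_left (hXS i j) (abs_nonneg _)
        _ = A x * S := by
            rw [hAdef, Finset.sum_mul]
            exact Finset.sum_congr rfl fun i _ => by rw [Finset.sum_mul]
    exact step.trans (mul_le_mul_of_nonneg_right (hmax₂ x hx) hS0)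
  -- choice of constants
  set B := M₂ + 2 * (MH / θ) with hBdef
  have hB0 : 0 ≤ B := by positivity
  refine ⟨c₀ / 2, by positivity, max 1 (2 * B / c₀), le_max_left _ _, ?_⟩
  intro γ hγ x hx X
  have hγ1 : (1:ℝ) ≤ γ := le_trans (le_max_left _ _) hγ
  have hγ0 : (0:ℝ) < γ := lt_of_lt_of_le one_pos hγ1
  have hγB : 2 * B ≤ γ * c₀ := by
    have := le_trans (le_max_right 1 (2 * B / c₀)) hγ
    calc 2 * B = (2 * B / c₀) * c₀ := by field_simp
      _ ≤ γ * c₀ := mul_le_mul_of_nonneg_right this hc₀.le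
  have hxO : x ∈ O := hKO hx
  rw [covhess_exp hO hψ γ hxO X, lapbel_exp hg1 hdet hO hψ γ hxO]
  set E := Real.exp (γ * ψ x) with hEdef
  have hE0 : 0 < E := Real.exp_pos _
  set q := ∑ i, ∑ j, g x i j * X i * X j with hqdef
  set S := ∑ i, (X i)^2 with hSdef
  have hS0 : 0 ≤ S := Finset.sum_nonneg fun i _ => sq_nonneg _
  have hSq : θ * S ≤ q := hgθ x X
  have hq0 : 0 ≤ q := le_trans (by positivity) hSq
  set P := ∑ i, pd ψ i x * X i with hPdef
  set Hψ := covHess g ψ x X with hHdef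
  set Lψ := LapBel g ψ x with hLdef
  have hHb : -(MH * S) ≤ Hψ := by
    have := (abs_le.mp (hcovbound x hx X)).1
    linarith
  have hLb : -M₂ ≤ Lψ := by
    have := (abs_le.mp (le_of_eq (rfl : |Lψ| = |Lψ|))).1
    have h := hmax₁ x hx
    have := neg_abs_le Lψ
    linarith
  have hQc : c₀ ≤ Q x := hmin x hx
  have h2H : -((2 * (MH / θ)) * q) ≤ 2 * Hψ := by
    have h1 : MH * S ≤ (MH / θ) * q := by
      rw [div_mul_eq_mul_div, le_div_iff₀ hθ]
      nlinarith [mul_le_mul_of_nonneg_left hSq hMH0]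
    linarith
  have key : c₀ / 2 * γ * q ≤ 2 * (γ * P^2 + Hψ) + (γ * Q x + Lψ) * q := by
    have e1 : γ * c₀ * q ≤ γ * Q x * q :=
      mul_le_mul_of_nonneg_right (mul_le_mul_of_nonneg_left hQc hγ0.le) hq0
    have e2 : -M₂ * q ≤ Lψ * q := mul_le_mul_of_nonneg_right hLb hq0
    have e3 : 0 ≤ γ * P^2 := mul_nonneg hγ0.le (sq_nonneg _)
    have e5 : B * q ≤ (γ * c₀ / 2) * q := by
      apply mul_le_mul_of_nonneg_right _ hq0
      rw [le_div_iff₀ (by norm_num : (0:ℝ) < 2)]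
      linarith
    have e6 : (γ * Q x + Lψ) * q = γ * Q x * q + Lψ * q := by ring
    have e7 : B * q = M₂ * q + (2 * (MH / θ)) * q := by rw [hBdef]; ring
    linarith
  calc c₀ / 2 * γ ^ 2 * E * q = (γ * E) * (c₀ / 2 * γ * q) := by ring
    _ ≤ (γ * E) * (2 * (γ * P^2 + Hψ) + (γ * Q x + Lψ) * q) := by
        exact mul_le_mul_of_nonneg_left key (by positivity)
    _ = 2 * (γ * E * (γ * P^2 + Hψ)) + γ * E * (γ * Q x + Lψ) * q := by ring
end
end

section
/- Pointwise pseudoconvexity estimate for the zeroth-order term. Let K ⊂ ℝ^n be compact, let ψ be of class C^2 on an open neighborhood of K, and assume δ := min over K of |∇ψ| > 0. Then there exist C > 0 and γ* ≥ 1 (depending on g, ψ, K, δ) such that for all γ ≥ γ* and all x ∈ K, writing φ̃ := e^{γψ} and ∇_g φ̃ = (g^{ij}∂_j φ̃)_i, one has 2 ∇²_g φ̃(∇_g φ̃, ∇_g φ̃) − (Δ_g φ̃) |∇_g φ̃|_g^2 ≥ C γ^4 φ̃^3, where |∇_g φ̃|_g^2 = g^{ij} ∂_i φ̃ ∂_j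 φ̃. -/
open MeasureTheory Set
open scoped Topology RealInnerProductSpace

noncomputable section

variable {n : ℕ}

/-! ### Auxiliary machinery for the proof -/

section PseudoconvexAux

lemma my_contDiff_det (M : Eucl n → Matrix (Fin n) (Fin n) ℝ)
    (hM : ∀ i j, ContDiff ℝ 1 fun x => M x i j) :
    ContDiff ℝ 1 fun x => (M x).det := by
  have : (fun x => (M x).det)
      = fun x => ∑ σ : Equiv.Perm (Fin n), ((Equiv.Perm.sign σ : ℤ) : ℝ) * ∏ i, M x (σ i) i := by
    funext x
    simp [Matrix.det_apply, Units.smul_def, zsmul_eq_mul]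
  rw [this]
  exact ContDiff.sum fun σ _ => contDiff_const.mul (contDiff_prod fun i _ => hM (σ i) i)

lemma my_contDiff_inv_entry (g : Eucl n → Matrix (Fin n) (Fin n) ℝ)
    (hg : ∀ i j, ContDiff ℝ 1 fun x => g x i j)
    (hdet : ∀ x, (g x).det ≠ 0) (i j : Fin n) :
    ContDiff ℝ 1 fun x => (g x)⁻¹ i j := by
  have hadj : ContDiff ℝ 1 fun x => (g x).adjugate i j := by
    have : (fun x => (g x).adjugate i j)
        = fun x => ((g x).updateRow j (Pi.single i 1)).det := by
      funext x; rw [Matrix.adjugate_apply]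
    rw [this]
    refine my_contDiff_det _ fun k l => ?_
    by_cases hk : k = j
    · subst hk; simp only [Matrix.updateRow_self]; exact contDiff_const
    · simp only [Matrix.updateRow_ne hk]; exact hg k l
  have : (fun x => (g x)⁻¹ i j) = fun x => ((g x).det)⁻¹ * (g x).adjugate i j := by
    funext x
    rw [Matrix.inv_def, Matrix.smul_apply, Ring.inverse_eq_inv', smul_eq_mul]
  rw [this]
  exact ((my_contDiff_det g hg).inv hdet).mul hadj

lemma my_posdef_of_elliptic (g : Eucl n → Matrix (Fin n) (Fin n) ℝ)
    (hsymm : ∀ x, (g x).IsSymm) (θ : ℝ) (hθ : 0 < θ)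
    (hell : UniformlyElliptic g θ) (x : Eucl n) : (g x).PosDef := by
  refine Matrix.PosDef.of_dotProduct_mulVec_pos ?_ ?_
  · ext i j
    simp only [Matrix.conjTranspose_apply, RCLike.star_def, starRingEnd_apply, star_trivial]
    exact (hsymm x).apply i j
  · intro ξ hξ
    have h1 : dotProduct (star ξ) (Matrix.mulVec (g x) ξ)
        = ∑ i, ∑ j, g x i j * ξ i * ξ j := by
      simp only [dotProduct, Matrix.mulVec, star_trivial, Pi.star_apply, Finset.mul_sum]
      exact Finset.sum_congr rfl fun i _ => Finset.sum_congr rfl fun j _ => by ring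
    rw [h1]
    refine lt_of_lt_of_le ?_ (hell x ξ)
    have hex : ∃ i, ξ i ≠ 0 := by
      by_contra h; push_neg at h; exact hξ (funext h)
    obtain ⟨i, hi⟩ := hex
    have hpos : (0:ℝ) < ∑ i, (ξ i)^2 :=
      Finset.sum_pos' (fun k _ => sq_nonneg _) ⟨i, Finset.mem_univ i, by positivity⟩
    positivity

lemma my_pd_exp (ψ : Eucl n → ℝ) (γ : ℝ) (x : Eucl n) (hψx : DifferentiableAt ℝ ψ x)
    (j : Fin n) :
    pd (fun y => Real.exp (γ * ψ y)) j x = γ * Real.exp (γ * ψ x) * pd ψ j x := by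
  have h1 : HasFDerivAt (fun y => γ * ψ y) (γ • fderiv ℝ ψ x) x :=
    hψx.hasFDerivAt.const_mul γ
  have h2 := h1.exp
  rw [pd, h2.fderiv]
  simp [pd]
  ring

lemma my_pd_pd_exp (ψ : Eucl n → ℝ) (O : Set (Eucl n)) (hO : IsOpen O)
    (hψ : ContDiffOn ℝ 2 ψ O) (γ : ℝ) (x : Eucl n) (hx : x ∈ O) (i j : Fin n) :
    pd (pd (fun y => Real.exp (γ * ψ y)) j) i x
      = γ * Real.exp (γ * ψ x) *
          (γ * pd ψ i x * pd ψ j x + pd (fun y => pd ψ j y) i x) := by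
  have hdO : ∀ y ∈ O, DifferentiableAt ℝ ψ y := fun y hy =>
    (hψ.differentiableOn (by norm_num)).differentiableAt (hO.mem_nhds hy)
  have hF : ContDiffOn ℝ 1 (fderiv ℝ ψ) O := hψ.fderiv_of_isOpen hO (by norm_num)
  have hFj : ContDiffOn ℝ 1 (fun y => pd ψ j y) O := by
    simp only [pd]
    exact hF.clm_apply contDiffOn_const
  have hFjx : DifferentiableAt ℝ (fun y => pd ψ j y) x :=
    (hFj.differentiableOn one_ne_zero).differentiableAt (hO.mem_nhds hx)
  have hEq : (fun y => pd (fun z => Real.exp (γ * ψ z)) j y)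
      =ᶠ[nhds x] fun y => γ * (Real.exp (γ * ψ y) * pd ψ j y) := by
    filter_upwards [hO.mem_nhds hx] with y hy
    rw [my_pd_exp ψ γ y (hdO y hy) j]; ring
  rw [pd, hEq.fderiv_eq]
  have hde : HasFDerivAt (fun y => Real.exp (γ * ψ y))
      (Real.exp (γ * ψ x) • (γ • fderiv ℝ ψ x)) x := ((hdO x hx).hasFDerivAt.const_mul γ).exp
  have hdF := hFjx.hasFDerivAt
  have h := (hde.fun_mul hdF).const_mul γ
  rw [h.fderiv]
  simp only [ContinuousLinearMap.coe_smul', Pi.smul_apply, ContinuousLinearMap.add_apply,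
    smul_eq_mul, pd]
  ring

/-- first derivatives of `ψ` as a vector -/
def myH (ψ : Eucl n → ℝ) (i j : Fin n) (x : Eucl n) : ℝ := pd (fun y => pd ψ j y) i x

def myA (g : Eucl n → Matrix (Fin n) (Fin n) ℝ) (i j : Fin n) (x : Eucl n) : ℝ :=
  Real.sqrt (g x).det * (g x)⁻¹ i j

def myGP (g : Eucl n → Matrix (Fin n) (Fin n) ℝ) (ψ : Eucl n → ℝ) (i : Fin n) (x : Eucl n) : ℝ :=
  ∑ j, (g x)⁻¹ i j * pd ψ j x

def myQ (g : Eucl n → Matrix (Fin n) (Fin n) ℝ) (ψ : Eucl n → ℝ) (x : Eucl n) : ℝ :=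
  ∑ i, ∑ j, (g x)⁻¹ i j * pd ψ i x * pd ψ j x

def myR1 (g : Eucl n → Matrix (Fin n) (Fin n) ℝ) (ψ : Eucl n → ℝ) (x : Eucl n) : ℝ :=
  ∑ i, ∑ j, (myH ψ i j x - ∑ k, christoffel g k i j x * pd ψ k x)
      * myGP g ψ i x * myGP g ψ j x

def myR2 (g : Eucl n → Matrix (Fin n) (Fin n) ℝ) (ψ : Eucl n → ℝ) (x : Eucl n) : ℝ :=
  (∑ i, ∑ j, (g x)⁻¹ i j * myH ψ i j x)
    + (Real.sqrt (g x).det)⁻¹ * ∑ i, ∑ j, pd (myA g i j) i x * pd ψ j x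

lemma my_mul_double_sum (c : ℝ) (f : Fin n → Fin n → ℝ) :
    c * ∑ i, ∑ j, f i j = ∑ i, ∑ j, c * f i j := by
  rw [Finset.mul_sum]
  exact Finset.sum_congr rfl fun i _ => Finset.mul_sum _ _ _

lemma my_lapBel_exp (g : Eucl n → Matrix (Fin n) (Fin n) ℝ)
    (hgA : ∀ (i j : Fin n) (y : Eucl n), DifferentiableAt ℝ (myA g i j) y)
    (hdet : ∀ y, 0 < (g y).det)
    (ψ : Eucl n → ℝ) (O : Set (Eucl n)) (hO : IsOpen O) (hψ : ContDiffOn ℝ 2 ψ O)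
    (γ : ℝ) (x : Eucl n) (hx : x ∈ O) :
    LapBel g (fun y => Real.exp (γ * ψ y)) x
      = γ * Real.exp (γ * ψ x) * (γ * myQ g ψ x + myR2 g ψ x) := by
  have hdO : ∀ y ∈ O, DifferentiableAt ℝ ψ y := fun y hy =>
    (hψ.differentiableOn (by norm_num)).differentiableAt (hO.mem_nhds hy)
  have hF : ContDiffOn ℝ 1 (fderiv ℝ ψ) O := hψ.fderiv_of_isOpen hO (by norm_num)
  have hFj : ∀ j : Fin n, ContDiffOn ℝ 1 (fun y => pd ψ j y) O := fun j => by
    simp only [pd]; exact hF.clm_apply contDiffOn_const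
  have hFjx : ∀ j : Fin n, DifferentiableAt ℝ (fun y => pd ψ j y) x := fun j =>
    ((hFj j).differentiableOn one_ne_zero).differentiableAt (hO.mem_nhds hx)
  have hde : HasFDerivAt (fun y => Real.exp (γ * ψ y))
      (Real.exp (γ * ψ x) • (γ • fderiv ℝ ψ x)) x := ((hdO x hx).hasFDerivAt.const_mul γ).exp
  have key : ∀ i : Fin n,
      pd (fun y => Real.sqrt (g y).det * ∑ j, (g y)⁻¹ i j *
            pd (fun z => Real.exp (γ * ψ z)) j y) i x
        = ∑ j, (pd (myA g i j) i x * (γ * (Real.exp (γ * ψ x) * pd ψ j x))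
            + myA g i j x * (γ * (Real.exp (γ * ψ x) * myH ψ i j x
                + pd ψ j x * (Real.exp (γ * ψ x) * (γ * pd ψ i x))))) := by
    intro i
    have hEq : (fun y => Real.sqrt (g y).det * ∑ j, (g y)⁻¹ i j *
          pd (fun z => Real.exp (γ * ψ z)) j y)
        =ᶠ[nhds x] fun y => ∑ j, myA g i j y * (γ * (Real.exp (γ * ψ y) * pd ψ j y)) := by
      filter_upwards [hO.mem_nhds hx] with y hy
      rw [Finset.mul_sum]
      refine Finset.sum_congr rfl fun j _ => ?_
      rw [my_pd_exp ψ γ y (hdO y hy) j, myA]; ring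
    rw [pd, hEq.fderiv_eq]
    have hs := HasFDerivAt.fun_sum (fun j (_ : j ∈ Finset.univ) =>
      ((hgA i j x).hasFDerivAt.fun_mul ((hde.fun_mul (hFjx j).hasFDerivAt).const_mul γ)))
    rw [hs.fderiv, ContinuousLinearMap.sum_apply]
    refine Finset.sum_congr rfl fun j _ => ?_
    simp only [ContinuousLinearMap.add_apply, ContinuousLinearMap.coe_smul', Pi.smul_apply,
      smul_eq_mul, myH, pd]
    ring
  rw [LapBel]
  simp only [key]
  have hs0 : (0:ℝ) < Real.sqrt (g x).det := Real.sqrt_pos.mpr (hdet x)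
  have hsne : Real.sqrt (g x).det ≠ 0 := ne_of_gt hs0
  set s : ℝ := Real.sqrt (g x).det with hs_def
  set e : ℝ := Real.exp (γ * ψ x) with he_def
  have hA : ∀ i j : Fin n, myA g i j x = s * (g x)⁻¹ i j := fun i j => rfl
  rw [myR2, myQ]
  set HH : ℝ := ∑ i, ∑ j, (g x)⁻¹ i j * myH ψ i j x with hHH
  set DP : ℝ := ∑ i, ∑ j, pd (myA g i j) i x * pd ψ j x with hDP
  set Q : ℝ := ∑ i, ∑ j, (g x)⁻¹ i j * pd ψ i x * pd ψ j x with hQ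
  have step : ∑ i, ∑ j, (pd (myA g i j) i x * (γ * (e * pd ψ j x))
      + myA g i j x * (γ * (e * myH ψ i j x + pd ψ j x * (e * (γ * pd ψ i x)))))
      = (γ * e) * DP + ((s * (γ * e)) * HH + (s * (γ * e * γ)) * Q) := by
    rw [hDP, hHH, hQ, my_mul_double_sum (γ * e), my_mul_double_sum (s * (γ * e)),
      my_mul_double_sum (s * (γ * e * γ)), ← Finset.sum_add_distrib, ← Finset.sum_add_distrib]
    refine Finset.sum_congr rfl fun i _ => ?_
    rw [← Finset.sum_add_distrib, ← Finset.sum_add_distrib]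
    refine Finset.sum_congr rfl fun j _ => ?_
    rw [hA]; ring
  rw [step]
  field_simp
  linear_combination (-(γ * e * DP)) * (mul_inv_cancel₀ hsne : s * (Real.sqrt (g x).det)⁻¹ = 1)

lemma my_gGrad_exp (g : Eucl n → Matrix (Fin n) (Fin n) ℝ) (ψ : Eucl n → ℝ) (γ : ℝ)
    (x : Eucl n) (hψx : DifferentiableAt ℝ ψ x) :
    gGrad g (fun y => Real.exp (γ * ψ y)) x
      = fun i => γ * Real.exp (γ * ψ x) * myGP g ψ i x := by
  funext i
  rw [gGrad, myGP, Finset.mul_sum]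
  refine Finset.sum_congr rfl fun j _ => ?_
  rw [my_pd_exp ψ γ x hψx j]; ring

lemma my_gInner_exp (g : Eucl n → Matrix (Fin n) (Fin n) ℝ) (ψ : Eucl n → ℝ) (γ : ℝ)
    (x : Eucl n) (hψx : DifferentiableAt ℝ ψ x) :
    gInnerGrad g (fun y => Real.exp (γ * ψ y)) (fun y => Real.exp (γ * ψ y)) x
      = γ ^ 2 * Real.exp (γ * ψ x) ^ 2 * myQ g ψ x := by
  rw [gInnerGrad, myQ, my_mul_double_sum]
  refine Finset.sum_congr rfl fun i _ => Finset.sum_congr rfl fun j _ => ?_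
  rw [my_pd_exp ψ γ x hψx i, my_pd_exp ψ γ x hψx j]; ring

lemma my_hQGP (g : Eucl n → Matrix (Fin n) (Fin n) ℝ) (ψ : Eucl n → ℝ) (x : Eucl n) :
    ∑ i, pd ψ i x * myGP g ψ i x = myQ g ψ x := by
  rw [myQ]
  refine Finset.sum_congr rfl fun i _ => ?_
  rw [myGP, Finset.mul_sum]
  exact Finset.sum_congr rfl fun j _ => by ring

lemma my_covHess_exp (g : Eucl n → Matrix (Fin n) (Fin n) ℝ) (ψ : Eucl n → ℝ)
    (O : Set (Eucl n)) (hO : IsOpen O) (hψ : ContDiffOn ℝ 2 ψ O)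
    (γ : ℝ) (x : Eucl n) (hx : x ∈ O) :
    covHess g (fun y => Real.exp (γ * ψ y)) x (gGrad g (fun y => Real.exp (γ * ψ y)) x)
      = γ ^ 3 * Real.exp (γ * ψ x) ^ 3 * (γ * myQ g ψ x ^ 2 + myR1 g ψ x) := by
  have hψx : DifferentiableAt ℝ ψ x :=
    (hψ.differentiableOn (by norm_num)).differentiableAt (hO.mem_nhds hx)
  set e : ℝ := Real.exp (γ * ψ x) with he
  have hgg := my_gGrad_exp g ψ γ x hψx
  rw [covHess, hgg]
  simp only [my_pd_pd_exp ψ O hO hψ γ x hx, my_pd_exp ψ γ x hψx]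
  have hR : γ ^ 3 * e ^ 3 * (γ * myQ g ψ x ^ 2 + myR1 g ψ x)
      = ∑ i, ∑ j, γ ^ 3 * e ^ 3 *
          (γ * ((pd ψ i x * myGP g ψ i x) * (pd ψ j x * myGP g ψ j x))
            + (myH ψ i j x - ∑ k, christoffel g k i j x * pd ψ k x)
                * myGP g ψ i x * myGP g ψ j x) := by
    rw [myR1, ← my_hQGP g ψ x, sq, Finset.sum_mul_sum, my_mul_double_sum γ]
    simp only [← Finset.sum_add_distrib]
    rw [my_mul_double_sum]
  rw [hR]
  refine Finset.sum_congr rfl fun i _ => Finset.sum_congr rfl fun j _ => ?_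
  have hk : ∑ k, christoffel g k i j x * (γ * e * pd ψ k x)
      = γ * e * ∑ k, christoffel g k i j x * pd ψ k x := by
    rw [Finset.mul_sum]
    exact Finset.sum_congr rfl fun k _ => by ring
  rw [hk, myH]
  ring

lemma my_gradient_coord (ψ : Eucl n → ℝ) (x : Eucl n) (i : Fin n) :
    gradient ψ x i = pd ψ i x := by
  have h1 : ⟪gradient ψ x, EuclideanSpace.single i (1:ℝ)⟫
      = fderiv ℝ ψ x (EuclideanSpace.single i 1) := by
    rw [gradient, InnerProductSpace.toDual_symm_apply]
  rw [pd, ← h1, real_inner_comm, EuclideanSpace.inner_single_left]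
  simp

lemma my_pdvec_ne_zero (ψ : Eucl n → ℝ) (x : Eucl n) (δ : ℝ) (hδ : 0 < δ)
    (h : δ ≤ ‖gradient ψ x‖) : (fun i => pd ψ i x) ≠ 0 := by
  intro hc
  have hz : gradient ψ x = 0 := by
    ext i
    have := congrFun hc i
    simp only [Pi.zero_apply] at this ⊢
    rw [my_gradient_coord, this]; simp
  rw [hz, norm_zero] at h
  linarith

lemma my_myQ_pos (g : Eucl n → Matrix (Fin n) (Fin n) ℝ) (ψ : Eucl n → ℝ) (x : Eucl n)
    (hpd : (g x).PosDef) (hξ : (fun i => pd ψ i x) ≠ 0) : 0 < myQ g ψ x := by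
  have h := hpd.inv.dotProduct_mulVec_pos hξ
  have heq : dotProduct (star fun i => pd ψ i x)
      (Matrix.mulVec (g x)⁻¹ fun i => pd ψ i x) = myQ g ψ x := by
    simp only [dotProduct, Matrix.mulVec, star_trivial, Pi.star_apply, myQ,
      Finset.mul_sum]
    exact Finset.sum_congr rfl fun i _ => Finset.sum_congr rfl fun j _ => by ring
  rwa [heq] at h

lemma my_cont_aux (g : Eucl n → Matrix (Fin n) (Fin n) ℝ)
    (hgc : ∀ i j, ContDiff ℝ 1 fun x => g x i j) (hdet : ∀ x, 0 < (g x).det)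
    (ψ : Eucl n → ℝ) (O : Set (Eucl n)) (hO : IsOpen O) (hψ : ContDiffOn ℝ 2 ψ O) :
    ContinuousOn (myQ g ψ) O ∧
      ContinuousOn (fun x => 2 * myR1 g ψ x - myQ g ψ x * myR2 g ψ x) O := by
  have hginv : ∀ i j, ContDiff ℝ 1 fun x => (g x)⁻¹ i j :=
    my_contDiff_inv_entry g hgc (fun x => ne_of_gt (hdet x))
  have hginvc : ∀ i j, Continuous fun x => (g x)⁻¹ i j := fun i j => (hginv i j).continuous
  have hF : ContDiffOn ℝ 1 (fderiv ℝ ψ) O := hψ.fderiv_of_isOpen hO (by norm_num)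
  have hFj : ∀ j : Fin n, ContDiffOn ℝ 1 (fun y => pd ψ j y) O := fun j => by
    simp only [pd]; exact hF.clm_apply contDiffOn_const
  have cP : ∀ j, ContinuousOn (fun x => pd ψ j x) O := fun j => (hFj j).continuousOn
  have cH : ∀ i j, ContinuousOn (fun x => myH ψ i j x) O := fun i j => by
    have h1 : ContinuousOn (fderiv ℝ (fun y => pd ψ j y)) O :=
      (hFj j).continuousOn_fderiv_of_isOpen hO (le_refl 1)
    exact (ContinuousLinearMap.apply ℝ ℝ
      (EuclideanSpace.single i (1:ℝ))).continuous.comp_continuousOn h1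
  have cpdg : ∀ (a b c : Fin n), Continuous fun x => pd (fun y => g y a b) c x := by
    intro a b c
    have h1 := (hgc a b).continuous_fderiv one_ne_zero
    exact (ContinuousLinearMap.apply ℝ ℝ
      (EuclideanSpace.single c (1:ℝ))).continuous.comp h1
  have cChr : ∀ k i j, Continuous fun x => christoffel g k i j x := by
    intro k i j
    have : (fun x => christoffel g k i j x) = fun x => (1 / 2 : ℝ) * ∑ l, (g x)⁻¹ k l *
        (pd (fun y => g y j l) i x + pd (fun y => g y i l) j x - pd (fun y => g y i j) l x) := by
      funext x; rw [christoffel]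
    rw [this]
    exact continuous_const.mul (continuous_finset_sum _ fun l _ =>
      (hginvc k l).mul (((cpdg j l i).add (cpdg i l j)).sub (cpdg i j l)))
  have hdetC : ContDiff ℝ 1 fun x => (g x).det := my_contDiff_det g hgc
  have hsq : ContDiff ℝ 1 fun x => Real.sqrt (g x).det := by
    rw [contDiff_iff_contDiffAt]
    exact fun x => hdetC.contDiffAt.sqrt (ne_of_gt (hdet x))
  have hAcd : ∀ i j, ContDiff ℝ 1 fun x => myA g i j x := fun i j => hsq.mul (hginv i j)
  have cDa : ∀ i j, Continuous fun x => pd (myA g i j) i x := by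
    intro i j
    have h1 := (hAcd i j).continuous_fderiv one_ne_zero
    exact (ContinuousLinearMap.apply ℝ ℝ
      (EuclideanSpace.single i (1:ℝ))).continuous.comp h1
  have csinv : Continuous fun x => (Real.sqrt (g x).det)⁻¹ :=
    hsq.continuous.inv₀ fun x => ne_of_gt (Real.sqrt_pos.mpr (hdet x))
  have cQ : ContinuousOn (myQ g ψ) O := by
    refine continuousOn_finset_sum _ fun i _ => continuousOn_finset_sum _ fun j _ => ?_
    exact (((hginvc i j).continuousOn.mul (cP i)).mul (cP j))
  have cGP : ∀ i, ContinuousOn (fun x => myGP g ψ i x) O := fun i =>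
    continuousOn_finset_sum _ fun j _ => (hginvc i j).continuousOn.mul (cP j)
  have cR1 : ContinuousOn (myR1 g ψ) O := by
    refine continuousOn_finset_sum _ fun i _ => continuousOn_finset_sum _ fun j _ => ?_
    refine (((cH i j).sub (continuousOn_finset_sum _ fun k _ =>
      (cChr k i j).continuousOn.mul (cP k))).mul (cGP i)).mul (cGP j)
  have cR2 : ContinuousOn (myR2 g ψ) O := by
    refine ContinuousOn.add ?_ ?_
    · exact continuousOn_finset_sum _ fun i _ => continuousOn_finset_sum _ fun j _ =>
        (hginvc i j).continuousOn.mul (cH i j)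
    · exact csinv.continuousOn.mul (continuousOn_finset_sum _ fun i _ =>
        continuousOn_finset_sum _ fun j _ => (cDa i j).continuousOn.mul (cP j))
  exact ⟨cQ, (continuousOn_const.mul cR1).sub (cQ.mul cR2)⟩

end PseudoconvexAux

/-- **Pointwise pseudoconvexity estimate for the zeroth-order term.**
For `φ̃ = e^{γψ}` and `γ` large:
`2∇²_g φ̃(∇_g φ̃,∇_g φ̃) − (Δ_g φ̃)|∇_g φ̃|_g² ≥ Cγ⁴φ̃³` on `K`. -/
theorem pseudoconvexity_zeroth_order_term
    (n : ℕ) (hn : 2 ≤ n)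
    (g : Eucl n → Matrix (Fin n) (Fin n) ℝ) (hg : MetricC1 g)
    (θ : ℝ) (hθ : 0 < θ) (hgθ : UniformlyElliptic g θ)
    (K : Set (Eucl n)) (hK : IsCompact K)
    (O : Set (Eucl n)) (hO : IsOpen O) (hKO : K ⊆ O)
    (ψ : Eucl n → ℝ) (hψ : ContDiffOn ℝ 2 ψ O)
    (δ : ℝ) (hδ : 0 < δ) (hψδ : ∀ x ∈ K, δ ≤ ‖gradient ψ x‖) :
    ∃ C > (0 : ℝ), ∃ γstar ≥ (1 : ℝ), ∀ γ ≥ γstar, ∀ x ∈ K,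
      C * γ ^ 4 * (Real.exp (γ * ψ x)) ^ 3 ≤
        2 * covHess g (fun y => Real.exp (γ * ψ y)) x
              (gGrad g (fun y => Real.exp (γ * ψ y)) x) -
          LapBel g (fun y => Real.exp (γ * ψ y)) x *
            gInnerGrad g (fun y => Real.exp (γ * ψ y))
              (fun y => Real.exp (γ * ψ y)) x := by
  classical
  obtain ⟨hsymm, hgc⟩ := hg
  rcases K.eq_empty_or_nonempty with hKe | hKne
  · exact ⟨1, one_pos, 1, le_refl 1, fun γ _ x hx => by simp [hKe] at hx⟩
  have hposdef : ∀ x, (g x).PosDef := fun x => my_posdef_of_elliptic g hsymm θ hθ hgθ x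
  have hdet : ∀ x, 0 < (g x).det := fun x => (hposdef x).det_pos
  have hginv : ∀ i j, ContDiff ℝ 1 fun x => (g x)⁻¹ i j :=
    my_contDiff_inv_entry g hgc (fun x => ne_of_gt (hdet x))
  have hsq : ContDiff ℝ 1 fun x => Real.sqrt (g x).det := by
    rw [contDiff_iff_contDiffAt]
    exact fun x => (my_contDiff_det g hgc).contDiffAt.sqrt (ne_of_gt (hdet x))
  have hAd : ∀ (i j : Fin n) (y : Eucl n), DifferentiableAt ℝ (myA g i j) y := fun i j y =>
    ((hsq.mul (hginv i j)).differentiable one_ne_zero).differentiableAt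
  obtain ⟨cQ, cE⟩ := my_cont_aux g hgc hdet ψ O hO hψ
  obtain ⟨B0, hB0⟩ := hK.exists_bound_of_continuousOn (cE.mono hKO)
  set B : ℝ := max B0 0 with hB_def
  obtain ⟨x₀, hx₀K, hx₀min⟩ := hK.exists_isMinOn hKne (cQ.mono hKO)
  set q0 : ℝ := myQ g ψ x₀ with hq0_def
  have hq0pos : 0 < q0 :=
    my_myQ_pos g ψ x₀ (hposdef x₀) (my_pdvec_ne_zero ψ x₀ δ hδ (hψδ x₀ hx₀K))
  refine ⟨q0 ^ 2 / 2, by positivity, max 1 (2 * (B + 1) / q0 ^ 2), le_max_left _ _,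
    fun γ hγ x hx => ?_⟩
  have hxO : x ∈ O := hKO hx
  have hψx : DifferentiableAt ℝ ψ x :=
    (hψ.differentiableOn (by norm_num)).differentiableAt (hO.mem_nhds hxO)
  rw [my_covHess_exp g ψ O hO hψ γ x hxO, my_lapBel_exp g hAd hdet ψ O hO hψ γ x hxO,
    my_gInner_exp g ψ γ x hψx]
  set e : ℝ := Real.exp (γ * ψ x) with he_def
  set Q : ℝ := myQ g ψ x with hQ_def
  set R1 : ℝ := myR1 g ψ x with hR1_def
  set R2 : ℝ := myR2 g ψ x with hR2_def
  have hE : |2 * R1 - Q * R2| ≤ B := by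
    have := hB0 x hx
    rw [Real.norm_eq_abs] at this
    exact le_trans this (le_max_left _ _)
  have hQge : q0 ≤ Q := isMinOn_iff.mp hx₀min x hx
  have hγ1 : (1:ℝ) ≤ γ := le_trans (le_max_left _ _) hγ
  have hγB : 2 * (B + 1) / q0 ^ 2 ≤ γ := le_trans (le_max_right _ _) hγ
  have hγq : 2 * (B + 1) ≤ γ * q0 ^ 2 := by
    rw [div_le_iff₀ (by positivity)] at hγB
    linarith
  have key : q0 ^ 2 / 2 * γ ≤ γ * Q ^ 2 + (2 * R1 - Q * R2) := by
    have h1 : -B ≤ 2 * R1 - Q * R2 := (abs_le.mp hE).1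
    have hQ2 : q0 ^ 2 ≤ Q ^ 2 := by nlinarith
    have h2 : γ * q0 ^ 2 ≤ γ * Q ^ 2 :=
      mul_le_mul_of_nonneg_left hQ2 (le_trans zero_le_one hγ1)
    linarith
  calc q0 ^ 2 / 2 * γ ^ 4 * e ^ 3 = (q0 ^ 2 / 2 * γ) * (γ ^ 3 * e ^ 3) := by ring
    _ ≤ (γ * Q ^ 2 + (2 * R1 - Q * R2)) * (γ ^ 3 * e ^ 3) :=
        mul_le_mul_of_nonneg_right key (by positivity)
    _ = 2 * (γ ^ 3 * e ^ 3 * (γ * Q ^ 2 + R1)) - γ * e * (γ * Q + R2) * (γ ^ 2 * e ^ 2 * Q) := by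
        ring
end
end
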